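/- arXiv:2312.14601 — 3 statements merged into one kernel-verified Lean document; each statement's English description precedes it below -/
import Mathlib

section
/- Let X ~ IG(μ,λ) and f be a differentiable function on (0,∞) with lim_{x→0} f(x)φ(x) = lim_{x→∞} f(x)φ(x) = 0 (φ the IG density), with all involved expectations finite. Then E[f(X)(λX² − μ²X − λμ²)] = 2μ² E[X² f'(X)]. -/
open MeasureTheory Real Set Filter

/-- The density of the inverse Gaussian distribution `IG(μ,λ)`. -/
noncomputable def igPDF (m l : ℝ) (x : ℝ) : ℝ :=
  if 0 < x then
    Real.sqrt (l / (2 * Real.pi)) * Real.exp (l / m) * x ^ (-(3 : ℝ) / 2) *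
      Real.exp (-(l / (2 * m)) * (x / m + m / x))
  else 0

lemma igPDF_hasDerivAt (m l : ℝ) (hm : 0 < m) {x : ℝ} (hx : 0 < x) :
    HasDerivAt (igPDF m l)
      (igPDF m l x * (l / (2 * x ^ 2) - 3 / (2 * x) - l / (2 * m ^ 2))) x := by
  set C := Real.sqrt (l / (2 * Real.pi)) * Real.exp (l / m) with hC
  have h1 : HasDerivAt (fun y : ℝ => y ^ (-(3 : ℝ) / 2))
      ((-(3 : ℝ) / 2) * x ^ ((-(3 : ℝ) / 2) - 1)) x :=
    Real.hasDerivAt_rpow_const (Or.inl hx.ne')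
  have h2 : HasDerivAt (fun y : ℝ => y / m + m / y) (1 / m + (0 * x - m * 1) / x ^ 2) x := by
    exact ((hasDerivAt_id x).div_const m).add ((hasDerivAt_const x m).div (hasDerivAt_id x) hx.ne')
  have h3 : HasDerivAt (fun y : ℝ => Real.exp (-(l / (2 * m)) * (y / m + m / y)))
      (Real.exp (-(l / (2 * m)) * (x / m + m / x)) *
        (-(l / (2 * m)) * (1 / m + (0 * x - m * 1) / x ^ 2))) x := by
    simpa [mul_comm] using (h2.const_mul (-(l / (2 * m)))).exp
  have h4 := (h1.const_mul C).mul h3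
  have key : HasDerivAt (fun y : ℝ => C * y ^ (-(3 : ℝ) / 2) *
      Real.exp (-(l / (2 * m)) * (y / m + m / y)))
      (igPDF m l x * (l / (2 * x ^ 2) - 3 / (2 * x) - l / (2 * m ^ 2))) x := by
    refine HasDerivAt.congr_deriv h4 ?_
    have hphi : igPDF m l x = C * x ^ (-(3 : ℝ) / 2) *
        Real.exp (-(l / (2 * m)) * (x / m + m / x)) := by
      rw [igPDF, if_pos hx]
    have hr : x ^ ((-(3 : ℝ) / 2) - 1) = x ^ (-(3 : ℝ) / 2) * x⁻¹ := by
      rw [Real.rpow_sub hx, Real.rpow_one, div_eq_mul_inv]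
    rw [hphi, hr]
    set P := x ^ (-(3 : ℝ) / 2)
    set E := Real.exp (-(l / (2 * m)) * (x / m + m / x))
    field_simp
    ring
  apply key.congr_of_eventuallyEq
  filter_upwards [Ioi_mem_nhds hx] with y hy
  rw [igPDF, if_pos (mem_Ioi.mp hy)]

/-- Stein identity for the inverse Gaussian distribution: if `X ~ IG(μ,λ)` and
`f` is differentiable on `(0,∞)` with `f·φ → 0` at `0⁺` and at `∞`, and all
involved expectations are finite, then
`E[f(X)(λX² − μ²X − λμ²)] = 2μ² E[X² f'(X)]`. -/
theorem ig_stein_identity (m l : ℝ) (hm : 0 < m) (hl : 0 < l) (f : ℝ → ℝ)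
    (hf : DifferentiableOn ℝ f (Ioi (0 : ℝ)))
    (hlim0 : Tendsto (fun x => f x * igPDF m l x) (nhdsWithin 0 (Ioi (0 : ℝ))) (nhds 0))
    (hlimtop : Tendsto (fun x => f x * igPDF m l x) atTop (nhds 0))
    (hint1 : IntegrableOn
      (fun x => f x * (l * x ^ 2 - m ^ 2 * x - l * m ^ 2) * igPDF m l x)
      (Ioi (0 : ℝ)))
    (hint2 : IntegrableOn (fun x => x ^ 2 * deriv f x * igPDF m l x) (Ioi (0 : ℝ))) :
    ∫ x in Ioi (0 : ℝ), f x * (l * x ^ 2 - m ^ 2 * x - l * m ^ 2) * igPDF m l x =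
      2 * m ^ 2 * ∫ x in Ioi (0 : ℝ), x ^ 2 * deriv f x * igPDF m l x := by
  set φ := igPDF m l with hφ
  set g : ℝ → ℝ := fun x => x ^ 2 * f x * φ x with hg
  set gd : ℝ → ℝ := fun x => x ^ 2 * deriv f x * φ x -
      (1 / (2 * m ^ 2)) * (f x * (l * x ^ 2 - m ^ 2 * x - l * m ^ 2) * φ x) with hgd
  have hm2 : (m : ℝ) ^ 2 ≠ 0 := pow_ne_zero 2 hm.ne'
  -- g has derivative gd on (0,∞)
  have hderiv : ∀ x ∈ Ioi (0 : ℝ), HasDerivAt g (gd x) x := by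
    intro x hx
    have hx0 : (0 : ℝ) < x := hx
    have hfx : HasDerivAt f (deriv f x) x :=
      ((hf x hx).differentiableAt (Ioi_mem_nhds hx0)).hasDerivAt
    have hu : HasDerivAt (fun y : ℝ => y ^ 2 * f y) (2 * x * f x + x ^ 2 * deriv f x) x := by
      have := (hasDerivAt_pow 2 x).mul hfx
      refine this.congr_deriv ?_
      push_cast; ring
    have := hu.mul (igPDF_hasDerivAt m l hm hx0)
    refine this.congr_deriv ?_
    simp only [hgd, hφ]
    field_simp
    ring
  -- integrability of gd
  have hgd_int : IntegrableOn gd (Ioi (0 : ℝ)) :=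
    hint2.sub (hint1.const_mul (1 / (2 * m ^ 2)))
  -- limit of g at 0⁺ is 0
  have hg0 : Tendsto g (nhdsWithin 0 (Ioi (0 : ℝ))) (nhds 0) := by
    have h1 : Tendsto (fun x : ℝ => x ^ 2) (nhdsWithin 0 (Ioi (0 : ℝ))) (nhds 0) := by
      have h : Tendsto (fun x : ℝ => x ^ 2) (nhdsWithin 0 (Ioi (0 : ℝ))) (nhds ((0:ℝ) ^ 2)) :=
        ((continuous_pow 2).tendsto (0 : ℝ)).mono_left nhdsWithin_le_nhds
      simpa using h
    have := h1.mul hlim0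
    simp only [mul_zero] at this
    refine this.congr (fun x => ?_)
    simp only [hg]; ring
  -- limit of g at ∞ exists
  set c : ℝ := g 1 + ∫ t in Ioi (1 : ℝ), gd t with hc
  have hgtop : Tendsto g atTop (nhds c) := by
    have hint : Tendsto (fun b => ∫ t in (1 : ℝ)..b, gd t) atTop
        (nhds (∫ t in Ioi (1 : ℝ), gd t)) :=
      intervalIntegral_tendsto_integral_Ioi 1
        (hgd_int.mono_set (Ioi_subset_Ioi (by norm_num))) tendsto_id
    have := (tendsto_const_nhds.add hint : Tendsto (fun b => g 1 + ∫ t in (1:ℝ)..b, gd t)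
      atTop (nhds c))
    refine Tendsto.congr' ?_ this
    filter_upwards [eventually_ge_atTop (1 : ℝ)] with b hb
    have hsub : uIcc (1 : ℝ) b ⊆ Ioi 0 := by
      rw [uIcc_of_le hb]
      intro t ht
      exact lt_of_lt_of_le zero_lt_one ht.1
    have : ∫ t in (1:ℝ)..b, gd t = g b - g 1 := by
      apply intervalIntegral.integral_eq_sub_of_hasDerivAt
        (fun t ht => hderiv t (hsub ht))
      exact (hgd_int.mono_set hsub).intervalIntegrable
    rw [this]; ring
  -- c = 0
  have hc0 : c = 0 := by
    have hFtend : Tendsto (fun x => f x * (l * x ^ 2 - m ^ 2 * x - l * m ^ 2) * φ x)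
        atTop (nhds (c * l)) := by
      have h2 : Tendsto (fun x : ℝ => l - m ^ 2 / x - l * m ^ 2 / x ^ 2) atTop
          (nhds (l - 0 - 0)) := by
        refine (tendsto_const_nhds.sub ?_).sub ?_
        · exact tendsto_const_nhds.div_atTop tendsto_id
        · exact tendsto_const_nhds.div_atTop (tendsto_pow_atTop two_ne_zero)
      have := hgtop.mul h2
      rw [show c * (l - 0 - 0) = c * l by ring] at this
      refine this.congr' ?_
      filter_upwards [eventually_gt_atTop (0 : ℝ)] with x hx
      simp only [hg]
      field_simp
    have hmeas : ∀ s ∈ (atTop : Filter ℝ), volume s = ⊤ := by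
      intro s hs
      obtain ⟨a, ha⟩ := mem_atTop_sets.mp hs
      have hle : volume (Ici a) ≤ volume s := measure_mono (fun x hx => ha x hx)
      rw [Real.volume_Ici] at hle
      exact top_le_iff.mp hle
    have : c * l = 0 :=
      IntegrableAtFilter.eq_zero_of_tendsto ⟨Ioi 0, Ioi_mem_atTop 0, hint1⟩ hmeas hFtend
    rcases mul_eq_zero.mp this with h | h
    · exact h
    · exact absurd h hl.ne'
  -- FTC on (0,∞)
  have hFTC : ∫ x in Ioi (0 : ℝ), gd x = 0 := by
    set G : ℝ → ℝ := Function.update g 0 0 with hG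
    have hG0 : ContinuousWithinAt G (Ici (0 : ℝ)) 0 := by
      rw [hG, continuousWithinAt_update_same]
      refine hg0.mono_left (nhdsWithin_mono _ ?_)
      rw [Ici_sdiff_left]
    have hGderiv : ∀ x ∈ Ioi (0 : ℝ), HasDerivAt G (gd x) x := by
      intro x hx
      apply (hderiv x hx).congr_of_eventuallyEq
      filter_upwards [eventually_ne_nhds (ne_of_gt hx)] with y hy
      exact Function.update_of_ne hy 0 g
    have hGtop : Tendsto G atTop (nhds c) := by
      refine hgtop.congr' ?_
      filter_upwards [eventually_ne_atTop (0 : ℝ)] with x hx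
      exact (Function.update_of_ne hx 0 g).symm
    have := integral_Ioi_of_hasDerivAt_of_tendsto hG0 hGderiv hgd_int hGtop
    rw [this, hc0, hG, Function.update_self, sub_zero]
  -- conclude
  rw [integral_sub hint2 (hint1.const_mul (1 / (2 * m ^ 2)))] at hFTC
  rw [integral_const_mul] at hFTC
  have h2m : (2 * m ^ 2 : ℝ) ≠ 0 := by positivity
  field_simp at hFTC
  have he : (fun a => f a * (a * (l * a - m ^ 2) - m ^ 2 * l) * φ a) =
      (fun x => f x * (l * x ^ 2 - m ^ 2 * x - l * m ^ 2) * φ x) := by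
    funext a; ring
  rw [he] at hFTC
  linarith
end

section
/- Let X follow a negative binomial distribution NB(ν,π) with mean μ = ν(1−π)/π. Then for any bounded function f: ℕ → ℝ, ν·E[X f(X) − μ f(X+1)] = μ·E[X(f(X+1) − f(X))]. -/
open Real Set

/-- The pmf of the negative binomial distribution `NB(ν,π)` with real `ν > 0`. -/
noncomputable def nbPMF (v p : ℝ) (x : ℕ) : ℝ :=
  (Real.Gamma (v + x) / (Real.Gamma v * x.factorial)) * (1 - p) ^ x * p ^ v

private lemma nbPMF_pos (v p : ℝ) (hv : 0 < v) (hp : p ∈ Set.Ioo (0 : ℝ) 1) (x : ℕ) :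
    0 < nbPMF v p x := by
  unfold nbPMF
  have h1 : 0 < Real.Gamma (v + x) := Real.Gamma_pos_of_pos (by positivity)
  have h2 : (0:ℝ) < 1 - p := by linarith [hp.2]
  have h3 : 0 < Real.Gamma v := Real.Gamma_pos_of_pos hv
  have h4 : (0:ℝ) < x.factorial := by exact_mod_cast x.factorial_pos
  have h5 : (0:ℝ) < p := hp.1
  positivity

private lemma nbPMF_rec (v p : ℝ) (hv : 0 < v) (x : ℕ) :
    ((x:ℝ) + 1) * nbPMF v p (x + 1) = (v + x) * (1 - p) * nbPMF v p x := by
  unfold nbPMF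
  have hne : v + (x:ℝ) ≠ 0 := by positivity
  have hG : Real.Gamma (v + ((x : ℕ) + 1 : ℕ)) = (v + x) * Real.Gamma (v + x) := by
    push_cast
    rw [← add_assoc]
    exact Real.Gamma_add_one hne
  rw [hG]
  have hGv : Real.Gamma v ≠ 0 := (Real.Gamma_pos_of_pos hv).ne'
  have hfac : ((x.factorial : ℝ)) ≠ 0 := by exact_mod_cast x.factorial_pos.ne'
  have hfac1 : (((x+1).factorial : ℝ)) ≠ 0 := by exact_mod_cast (x+1).factorial_pos.ne'
  have hfs : (((x+1).factorial : ℝ)) = ((x:ℝ)+1) * x.factorial := by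
    rw [Nat.factorial_succ]; push_cast; ring
  rw [hfs]
  field_simp
  ring

private lemma summable_nbPMF (v p : ℝ) (hv : 0 < v) (hp : p ∈ Set.Ioo (0 : ℝ) 1) :
    Summable (nbPMF v p) := by
  have h2 : (0:ℝ) < 1 - p := by linarith [hp.2]
  apply summable_of_ratio_test_tendsto_lt_one (l := 1 - p) (by linarith [hp.1])
    (Filter.Eventually.of_forall fun x => (nbPMF_pos v p hv hp x).ne')
  have key : ∀ x : ℕ, ‖nbPMF v p (x+1)‖ / ‖nbPMF v p x‖ = (1-p) * ((v - 1) / (x + 1) + 1) := by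
    intro x
    have h0 := nbPMF_pos v p hv hp x
    have h1 := nbPMF_pos v p hv hp (x+1)
    rw [Real.norm_of_nonneg h1.le, Real.norm_of_nonneg h0.le]
    have hrec := nbPMF_rec v p hv x
    have hx1 : ((x:ℝ) + 1) ≠ 0 := by positivity
    field_simp
    nlinarith [hrec]
  simp_rw [key]
  have : Filter.Tendsto (fun x : ℕ => (v - 1) / ((x:ℝ) + 1) + 1) Filter.atTop (nhds (0 + 1)) := by
    apply Filter.Tendsto.add_const
    have := tendsto_one_div_add_atTop_nhds_zero_nat.const_mul (v - 1)
    simpa [div_eq_mul_inv] using this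
  have := this.const_mul (1 - p)
  simpa using this

private lemma summable_mul_nbPMF (v p : ℝ) (hv : 0 < v) (hp : p ∈ Set.Ioo (0 : ℝ) 1) :
    Summable (fun x : ℕ => (x:ℝ) * nbPMF v p x) := by
  have h2 : (0:ℝ) < 1 - p := by linarith [hp.2]
  apply summable_of_ratio_test_tendsto_lt_one (l := 1 - p) (by linarith [hp.1])
  · filter_upwards [Filter.eventually_ge_atTop 1] with x hx
    have h0 := nbPMF_pos v p hv hp x
    have : (0:ℝ) < x := by exact_mod_cast hx
    positivity
  · have key : ∀ᶠ x : ℕ in Filter.atTop,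
        ‖(((x+1:ℕ)):ℝ) * nbPMF v p (x+1)‖ / ‖(x:ℝ) * nbPMF v p x‖
          = (1-p) * (v / x + 1) := by
      filter_upwards [Filter.eventually_ge_atTop 1] with x hx
      have h0 := nbPMF_pos v p hv hp x
      have h1 := nbPMF_pos v p hv hp (x+1)
      have hxpos : (0:ℝ) < x := by exact_mod_cast hx
      push_cast
      rw [Real.norm_of_nonneg (by positivity), Real.norm_of_nonneg (by positivity)]
      have hrec := nbPMF_rec v p hv x
      field_simp
      nlinarith [hrec]
    refine Filter.Tendsto.congr' (Filter.EventuallyEq.symm key) ?_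
    have : Filter.Tendsto (fun x : ℕ => v / (x:ℝ) + 1) Filter.atTop (nhds (0 + 1)) := by
      apply Filter.Tendsto.add_const
      exact tendsto_const_div_atTop_nhds_zero_nat v
    have := this.const_mul (1 - p)
    simpa using this

/-- Stein identity for `NB(ν,π)` in the `(μ,ν)`-parametrization: for bounded
`f : ℕ → ℝ` and `μ = ν(1−π)/π`,
`ν·E[X f(X) − μ f(X+1)] = μ·E[X(f(X+1) − f(X))]`. -/
theorem nb_stein_nu (v p : ℝ) (hv : 0 < v) (hp : p ∈ Ioo (0 : ℝ) 1)
    (f : ℕ → ℝ) (hf : ∃ C, ∀ x, |f x| ≤ C) :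
    v * ∑' x : ℕ, ((x : ℝ) * f x - (v * (1 - p) / p) * f (x + 1)) * nbPMF v p x =
      (v * (1 - p) / p) *
        ∑' x : ℕ, (x : ℝ) * (f (x + 1) - f x) * nbPMF v p x := by
  obtain ⟨C, hC⟩ := hf
  have hC0 : 0 ≤ C := (abs_nonneg _).trans (hC 0)
  set μ := v * (1 - p) / p with hμ
  set P := nbPMF v p with hP
  have hp0 : (0:ℝ) < p := hp.1
  have hSP : Summable P := summable_nbPMF v p hv hp
  have hSxP : Summable (fun x : ℕ => (x:ℝ) * P x) := summable_mul_nbPMF v p hv hp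
  have hPpos : ∀ x, 0 < P x := nbPMF_pos v p hv hp
  -- summability helpers
  have hbound : ∀ (g : ℕ → ℝ), (∀ x, |g x| ≤ C) →
      Summable (fun x : ℕ => (x:ℝ) * g x * P x) := by
    intro g hg
    apply Summable.of_norm_bounded (hSxP.mul_left C)
    intro x
    rw [Real.norm_eq_abs, abs_mul, abs_mul, abs_of_nonneg (x.cast_nonneg : (0:ℝ) ≤ x),
      abs_of_nonneg (hPpos x).le]
    calc (x:ℝ) * |g x| * P x ≤ (x:ℝ) * C * P x := by
          apply mul_le_mul_of_nonneg_right _ (hPpos x).le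
          exact mul_le_mul_of_nonneg_left (hg x) x.cast_nonneg
      _ = C * ((x:ℝ) * P x) := by ring
  have hSg : Summable (fun x : ℕ => (x:ℝ) * f x * P x) := hbound f hC
  have hSg1 : Summable (fun x : ℕ => (x:ℝ) * f (x+1) * P x) := hbound (fun x => f (x+1)) (fun x => hC (x+1))
  have hSf1 : Summable (fun x : ℕ => f (x+1) * P x) := by
    apply Summable.of_norm_bounded (hSP.mul_left C)
    intro x
    rw [Real.norm_eq_abs, abs_mul, abs_of_nonneg (hPpos x).le]
    exact mul_le_mul_of_nonneg_right (hC (x+1)) (hPpos x).le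
  have hA : Summable (fun x : ℕ => v * (((x:ℝ) * f x - μ * f (x+1)) * P x)) := by
    apply Summable.mul_left
    have : (fun x : ℕ => ((x:ℝ) * f x - μ * f (x+1)) * P x)
        = fun x : ℕ => (x:ℝ) * f x * P x - μ * (f (x+1) * P x) := by
      funext x; ring
    rw [this]
    exact hSg.sub (hSf1.mul_left μ)
  have hB : Summable (fun x : ℕ => μ * ((x:ℝ) * (f (x+1) - f x) * P x)) := by
    apply Summable.mul_left
    have : (fun x : ℕ => (x:ℝ) * (f (x+1) - f x) * P x)
        = fun x : ℕ => (x:ℝ) * f (x+1) * P x - (x:ℝ) * f x * P x := by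
      funext x; ring
    rw [this]
    exact hSg1.sub hSg
  rw [← sub_eq_zero, ← tsum_mul_left, ← tsum_mul_left, ← Summable.tsum_sub hA hB]
  -- pointwise identity
  set g : ℕ → ℝ := fun x => (x:ℝ) * f x * P x with hg
  have hpt : ∀ x : ℕ, v * (((x:ℝ) * f x - μ * f (x+1)) * P x)
      - μ * ((x:ℝ) * (f (x+1) - f x) * P x) = (v / p) * (g x - g (x+1)) := by
    intro x
    have hrec : ((x:ℝ) + 1) * P (x + 1) = (v + x) * (1 - p) * P x := nbPMF_rec v p hv x
    have hg1 : g (x+1) = (v + x) * (1 - p) * P x * f (x+1) := by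
      simp only [hg]
      push_cast
      rw [show ((x:ℝ) + 1) * f (x+1) * P (x+1) = (((x:ℝ) + 1) * P (x+1)) * f (x+1) by ring, hrec]
    rw [hg1]
    simp only [hg, hμ]
    field_simp
    ring
  rw [tsum_congr hpt, tsum_mul_left]
  have hSgs : Summable (fun x : ℕ => g (x+1)) := (summable_nat_add_iff 1).mpr hSg
  have : ∑' x : ℕ, (g x - g (x+1)) = (∑' x : ℕ, g x) - ∑' x : ℕ, g (x+1) := Summable.tsum_sub hSg hSgs
  rw [this, Summable.tsum_eq_zero_add hSg]
  simp [hg]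
end

section
/- Let X follow a negative binomial distribution NB(ν,π) with mean μ = ν(1−π)/π. Then for any bounded function f: ℕ → ℝ, π·E[(X − μ) f(X+1)] = E[X(f(X+1) − f(X))]. -/
open Real Set

open Filter

lemma nb_pos {v p : ℝ} (hv : 0 < v) (hp : p ∈ Ioo (0 : ℝ) 1) (x : ℕ) :
    0 < nbPMF v p x := by
  unfold nbPMF
  have h1 : 0 < Real.Gamma (v + x) := Real.Gamma_pos_of_pos (by positivity)
  have h2 : 0 < Real.Gamma v := Real.Gamma_pos_of_pos hv
  have h3 : (0:ℝ) < 1 - p := by linarith [hp.2]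
  have h4 : (0:ℝ) < p := hp.1
  positivity

lemma nb_rec {v p : ℝ} (hv : 0 < v) (x : ℕ) :
    ((x:ℝ) + 1) * nbPMF v p (x + 1) = (1 - p) * (v + x) * nbPMF v p x := by
  have h2 : Real.Gamma v ≠ 0 := (Real.Gamma_pos_of_pos hv).ne'
  have h3 : ((x.factorial : ℝ)) ≠ 0 := Nat.cast_ne_zero.mpr x.factorial_ne_zero
  unfold nbPMF
  rw [show v + ((x:ℕ)+1 : ℕ) = (v + x) + 1 by push_cast; ring,
    Real.Gamma_add_one (by positivity), Nat.factorial_succ]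
  push_cast
  field_simp
  ring

lemma nb_summable_aux {v p : ℝ} (hv : 0 < v) (hp : p ∈ Ioo (0 : ℝ) 1) :
    Summable (fun x : ℕ => (v + x) * nbPMF v p x) := by
  have h3 : (0:ℝ) < 1 - p := by linarith [hp.2]
  apply summable_of_ratio_test_tendsto_lt_one (l := 1 - p) (by linarith [hp.1])
  · filter_upwards with n
    exact (mul_pos (by positivity) (nb_pos hv hp n)).ne'
  · have key : ∀ n : ℕ, ‖(v + ((n:ℕ)+1:ℕ)) * nbPMF v p (n+1)‖ / ‖(v + n) * nbPMF v p n‖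
        = (1 - p) * (1 + v / (n + 1)) := by
      intro n
      have h1 := nb_rec (p := p) hv n
      have hnb : nbPMF v p (n+1) = (1 - p) * (v + n) * nbPMF v p n / ((n:ℝ)+1) := by
        field_simp at h1 ⊢
        linarith [h1]
      rw [hnb, Real.norm_eq_abs, Real.norm_eq_abs,
        abs_of_pos (mul_pos (by positivity) (div_pos (mul_pos (mul_pos h3 (by positivity)) (nb_pos hv hp n)) (by positivity))),
        abs_of_pos (mul_pos (by positivity) (nb_pos hv hp n))]
      have := (nb_pos hv hp n).ne'
      have hvn : v + (n:ℝ) ≠ 0 := by positivity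
      push_cast
      field_simp
      ring
    rw [funext key]
    have : Tendsto (fun n : ℕ => v / ((n:ℝ) + 1)) atTop (nhds 0) :=
      Tendsto.div_atTop tendsto_const_nhds
        (tendsto_atTop_add_const_right _ 1 tendsto_natCast_atTop_atTop)
    have h2 : Tendsto (fun n : ℕ => (1 - p) * (1 + v / ((n:ℝ) + 1))) atTop (nhds ((1-p) * (1 + 0))) :=
      (tendsto_const_nhds.add this).const_mul _
    simpa using h2

/-- Stein identity for `NB(ν,π)` in the `(μ,π)`-parametrization: for bounded
`f : ℕ → ℝ` and `μ = ν(1−π)/π`,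
`π·E[(X − μ) f(X+1)] = E[X(f(X+1) − f(X))]`. -/
theorem nb_stein_pi (v p : ℝ) (hv : 0 < v) (hp : p ∈ Ioo (0 : ℝ) 1)
    (f : ℕ → ℝ) (hf : ∃ C, ∀ x, |f x| ≤ C) :
    p * ∑' x : ℕ, ((x : ℝ) - v * (1 - p) / p) * f (x + 1) * nbPMF v p x =
      ∑' x : ℕ, (x : ℝ) * (f (x + 1) - f x) * nbPMF v p x := by
  obtain ⟨C, hC⟩ := hf
  have hC0 : 0 ≤ C := (abs_nonneg _).trans (hC 0)
  have hp0 : (0:ℝ) < p := hp.1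
  have h1p : (0:ℝ) < 1 - p := by linarith [hp.2]
  have hS := nb_summable_aux hv hp
  -- summability of various series
  have bound : ∀ (g : ℕ → ℝ) (K : ℝ), (∀ x, |g x| ≤ K * ((v + x) * nbPMF v p x)) →
      Summable g := fun g K h =>
    Summable.of_norm_bounded (hS.mul_left K) h
  have hA : Summable (fun x : ℕ => (x:ℝ) * f (x+1) * nbPMF v p x) := by
    refine bound _ C fun x => ?_
    have := nb_pos hv hp x
    rw [abs_mul, abs_mul, abs_of_nonneg (Nat.cast_nonneg x : (0:ℝ) ≤ x),
      abs_of_pos this]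
    have hx : (x:ℝ) ≤ v + x := by linarith [Nat.cast_nonneg (α := ℝ) x]
    calc (x:ℝ) * |f (x+1)| * nbPMF v p x ≤ (v + x) * C * nbPMF v p x := by
          apply mul_le_mul_of_nonneg_right _ this.le
          exact mul_le_mul hx (hC _) (abs_nonneg _) (by positivity)
      _ = C * ((v + x) * nbPMF v p x) := by ring
  have hB : Summable (fun x : ℕ => (x:ℝ) * f x * nbPMF v p x) := by
    refine bound _ C fun x => ?_
    have := nb_pos hv hp x
    rw [abs_mul, abs_mul, abs_of_nonneg (Nat.cast_nonneg x : (0:ℝ) ≤ x),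
      abs_of_pos this]
    have hx : (x:ℝ) ≤ v + x := by linarith [Nat.cast_nonneg (α := ℝ) x]
    calc (x:ℝ) * |f x| * nbPMF v p x ≤ (v + x) * C * nbPMF v p x := by
          apply mul_le_mul_of_nonneg_right _ this.le
          exact mul_le_mul hx (hC _) (abs_nonneg _) (by positivity)
      _ = C * ((v + x) * nbPMF v p x) := by ring
  have hB' : Summable (fun x : ℕ => (1-p) * (v + x) * f (x+1) * nbPMF v p x) := by
    refine bound _ C fun x => ?_
    have hpos := nb_pos hv hp x
    rw [abs_mul, abs_mul, abs_mul, abs_of_pos h1p, abs_of_pos (by positivity : (0:ℝ) < v + x),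
      abs_of_pos hpos]
    calc (1-p) * (v + x) * |f (x+1)| * nbPMF v p x
        ≤ 1 * ((v + x) * C * nbPMF v p x) := by
          rw [one_mul]
          have : (1-p) * (v+x) ≤ 1 * (v+x) := by nlinarith
          have h2 : (1-p) * (v + x) * |f (x+1)| ≤ (v + x) * C := by
            calc (1-p) * (v + x) * |f (x+1)| ≤ 1 * (v+x) * C :=
              mul_le_mul this (hC _) (abs_nonneg _) (by positivity)
            _ = (v+x) * C := by ring
          exact mul_le_mul_of_nonneg_right h2 hpos.le
      _ = C * ((v + x) * nbPMF v p x) := by ring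
  -- shift identity
  have shift : ∑' x : ℕ, (x:ℝ) * f x * nbPMF v p x
      = ∑' x : ℕ, (1-p) * (v + x) * f (x+1) * nbPMF v p x := by
    rw [Summable.tsum_eq_zero_add hB]
    simp only [Nat.cast_zero, zero_mul]
    rw [zero_add]
    apply tsum_congr
    intro x
    have h := nb_rec (p := p) hv x
    push_cast
    calc ((x:ℝ)+1) * f (x+1) * nbPMF v p (x+1)
        = (((x:ℝ)+1) * nbPMF v p (x+1)) * f (x+1) := by ring
      _ = ((1-p) * (v + x) * nbPMF v p x) * f (x+1) := by rw [h]
      _ = (1-p) * (v + x) * f (x+1) * nbPMF v p x := by ring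
  calc p * ∑' x : ℕ, ((x : ℝ) - v * (1 - p) / p) * f (x + 1) * nbPMF v p x
      = ∑' x : ℕ, p * (((x : ℝ) - v * (1 - p) / p) * f (x + 1) * nbPMF v p x) := by
        rw [tsum_mul_left]
    _ = ∑' x : ℕ, ((x:ℝ) * f (x+1) * nbPMF v p x - (1-p) * (v + x) * f (x+1) * nbPMF v p x) := by
        apply tsum_congr
        intro x
        field_simp
        ring
    _ = ∑' x : ℕ, (x:ℝ) * f (x+1) * nbPMF v p x - ∑' x : ℕ, (1-p) * (v + x) * f (x+1) * nbPMF v p x :=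
        Summable.tsum_sub hA hB'
    _ = ∑' x : ℕ, (x:ℝ) * f (x+1) * nbPMF v p x - ∑' x : ℕ, (x:ℝ) * f x * nbPMF v p x := by
        rw [shift]
    _ = ∑' x : ℕ, ((x:ℝ) * f (x+1) * nbPMF v p x - (x:ℝ) * f x * nbPMF v p x) :=
        (Summable.tsum_sub hA hB).symm
    _ = ∑' x : ℕ, (x : ℝ) * (f (x + 1) - f x) * nbPMF v p x := by
        apply tsum_congr; intro x; ring
end
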